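/- Conversely, if w ∈ W^P satisfies ℓ(w s_γ) = ℓ(w) − ℓ(s_γ) and ℓ(w s'_γ) = ℓ(w) − ℓ(s'_γ) (equivalently Inv(w) ⊇ Inv(s_γ) and Inv(w s_γ) ⊇ R_P^+ \ R_Q^+), then wγ = −θ, i.e. w ∈ W(γ). -/

import Mathlib

/- A combinatorial framework for reduced crystallographic root systems with a
chosen system of simple roots, realized inside a real inner product space.
Weyl group elements are represented as plain functions `V → V` that are
compositions of simple reflections; `len` is the Coxeter length. -/

noncomputable section
open Classical
open scoped RealInnerProductSpace

namespace Pp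

variable {V : Type*} [NormedAddCommGroup V] [InnerProductSpace ℝ V]

/-- The coroot pairing `⟨x, α^∨⟩ = 2⟨x,α⟩/⟨α,α⟩`. -/
def cpr (x α : V) : ℝ := 2 * ⟪x, α⟫ / ⟪α, α⟫

/-- The reflection `s_α`, as a plain function. -/
def sref (α : V) : V → V := fun x => x - cpr x α • α

/-- `w` is a product of `n` reflections in simple roots taken from `Δ`. -/
def IsWord (Δ : Finset V) (w : V → V) (n : ℕ) : Prop :=
  ∃ l : List V, l.length = n ∧ (∀ α ∈ l, α ∈ Δ) ∧ w = (l.map sref).foldr (· ∘ ·) id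

/-- The Weyl group generated by the simple reflections, as a set of functions. -/
def Weyl (Δ : Finset V) : Set (V → V) := { w | ∃ n, IsWord Δ w n }

/-- Coxeter length with respect to the simple system `Δ`. -/
def len (Δ : Finset V) (w : V → V) : ℕ := sInf { n | IsWord Δ w n }

/-- The positive roots: roots which are nonnegative combinations of the
simple roots in `Δ`.  For a sub-system `Δ' ⊆ Δ`, `Pos Φ Δ'` is the set of
positive roots supported on `Δ'`. -/
def Pos (Φ Δ : Finset V) : Finset V :=
  Φ.filter fun β => ∃ c : V → ℝ, (∀ α ∈ Δ, 0 ≤ c α) ∧ β = ∑ α ∈ Δ, c α • α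

/-- Half sum of positive roots. -/
def rho (Φ Δ : Finset V) : V := (2:ℝ)⁻¹ • ∑ β ∈ Pos Φ Δ, β

/-- The axioms of a reduced crystallographic root system `Φ` with simple
system `Δ`. -/
structure IsRS (Φ Δ : Finset V) : Prop where
  zero_not_mem : (0:V) ∉ Φ
  neg_mem : ∀ α ∈ Φ, -α ∈ Φ
  reduced : ∀ α ∈ Φ, ∀ t : ℝ, t • α ∈ (Φ : Set V) → t = 1 ∨ t = -1
  cryst : ∀ α ∈ Φ, ∀ β ∈ Φ, ∃ k : ℤ, (k : ℝ) = cpr α β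
  refl_mem : ∀ α ∈ Φ, ∀ β ∈ Φ, sref α β ∈ Φ
  simple_mem : ∀ α ∈ Δ, α ∈ Φ
  simple_indep : LinearIndependent ℝ (fun α : Δ => (α : V))
  pos_or_neg : ∀ β ∈ Φ, β ∈ Pos Φ Δ ∨ -β ∈ Pos Φ Δ

/-- `β` is a quantum root: `ℓ(s_β) = ⟨2ρ, β^∨⟩ - 1`. -/
def IsQuantum (Φ Δ : Finset V) (β : V) : Prop :=
  (len Δ (sref β) : ℝ) = cpr ((2:ℝ) • rho Φ Δ) β - 1

/-- Minimal length coset representatives `W^P`: elements of `W` mapping the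
positive roots of the parabolic (`Pos Φ ΔP`) to positive roots. -/
def MinRep (Φ Δ ΔP : Finset V) (w : V → V) : Prop :=
  w ∈ Weyl Δ ∧ ∀ β ∈ Pos Φ ΔP, w β ∈ Pos Φ Δ

/-- `θ` is the highest root. -/
def IsHighest (Φ Δ : Finset V) (θ : V) : Prop :=
  θ ∈ Pos Φ Δ ∧ ∀ β ∈ Φ, ∃ c : V → ℝ, (∀ α ∈ Δ, 0 ≤ c α) ∧ θ - β = ∑ α ∈ Δ, c α • α

/-- All roots have the same length. -/
def SimplyLaced (Φ : Finset V) : Prop := ∀ α ∈ Φ, ∀ β ∈ Φ, ⟪α, α⟫ = ⟪β, β⟫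

/-- The node `ι ∈ Δ` is minuscule: the coefficient of `α_ι^∨` in every coroot
is at most `1`. -/
def Minuscule (Φ Δ : Finset V) (ι : V) : Prop :=
  ∀ β ∈ Φ, ∀ c : V → ℝ,
    (2 / ⟪β, β⟫) • β = ∑ α ∈ Δ, c α • ((2 / ⟪α, α⟫) • α) → c ι ≤ 1

/-- The node `ι ∈ Δ` is cominuscule: the coefficient of `α_ι` in every
positive root is at most `1`. -/
def Cominuscule (Φ Δ : Finset V) (ι : V) : Prop :=
  ∀ β ∈ Pos Φ Δ, ∀ c : V → ℝ,
    ((∀ α ∈ Δ, 0 ≤ c α) ∧ β = ∑ α ∈ Δ, c α • α) → c ι ≤ 1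

/-- `(Φ, Δ)` is the root system of type `B_n` in the standard coordinates
given by the orthonormal family `e`. -/
def TypeBData (Φ Δ : Finset V) (n : ℕ) (e : Fin n → V) : Prop :=
  Orthonormal ℝ e ∧
  (Φ : Set V) =
    ({v | ∃ i j : Fin n, i ≠ j ∧ (v = e i - e j ∨ v = e i + e j ∨ v = -(e i + e j))} ∪
     {v | ∃ i : Fin n, v = e i ∨ v = -(e i)}) ∧
  (Δ : Set V) =
    ({v | ∃ i : Fin n, ∃ h : (i : ℕ) + 1 < n, v = e i - e ⟨(i : ℕ) + 1, h⟩} ∪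
     {v | ∃ h : 0 < n, v = e ⟨n - 1, by omega⟩})

/-- `(Φ, Δ)` is the root system of type `C_n` in the standard coordinates
given by the orthonormal family `e`. -/
def TypeCData (Φ Δ : Finset V) (n : ℕ) (e : Fin n → V) : Prop :=
  Orthonormal ℝ e ∧
  (Φ : Set V) =
    ({v | ∃ i j : Fin n, i ≠ j ∧ (v = e i - e j ∨ v = e i + e j ∨ v = -(e i + e j))} ∪
     {v | ∃ i : Fin n, v = (2:ℝ) • e i ∨ v = -((2:ℝ) • e i)}) ∧
  (Δ : Set V) =
    ({v | ∃ i : Fin n, ∃ h : (i : ℕ) + 1 < n, v = e i - e ⟨(i : ℕ) + 1, h⟩} ∪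
     {v | ∃ h : 0 < n, v = (2:ℝ) • e ⟨n - 1, by omega⟩})

/-- `γ` is the distinguished (quantum) root attached to the minuscule node
`ι`: `γ = α_ι` in the simply-laced case, `γ = α_{n-1} + 2α_n = e_{n-1} + e_n`
in type `B_n` (with `ι = n`), and `γ = θ = 2e_1` in type `C_n` (with `ι = 1`). -/
def DistinguishedGamma (Φ Δ : Finset V) (ι γ : V) : Prop :=
  (SimplyLaced Φ ∧ γ = ι) ∨
  (∃ n : ℕ, ∃ _h : 2 ≤ n, ∃ e : Fin n → V, TypeBData Φ Δ n e ∧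
    ι = e ⟨n - 1, by omega⟩ ∧ γ = e ⟨n - 2, by omega⟩ + e ⟨n - 1, by omega⟩) ∨
  (∃ n : ℕ, ∃ _h : 2 ≤ n, ∃ e : Fin n → V, TypeCData Φ Δ n e ∧
    ι = e ⟨0, by omega⟩ - e ⟨1, by omega⟩ ∧ γ = (2:ℝ) • e ⟨0, by omega⟩)

end Pp

namespace Aux
open Pp

variable {V : Type*} [NormedAddCommGroup V] [InnerProductSpace ℝ V]

lemma cpr_add (x y α : V) : cpr (x + y) α = cpr x α + cpr y α := by
  unfold cpr; rw [inner_add_left]; ring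

lemma cpr_sub (x y α : V) : cpr (x - y) α = cpr x α - cpr y α := by
  unfold cpr; rw [inner_sub_left]; ring

lemma cpr_smul (c : ℝ) (x α : V) : cpr (c • x) α = c * cpr x α := by
  unfold cpr; rw [real_inner_smul_left]; ring

lemma cpr_self {α : V} (h : ⟪α, α⟫ ≠ 0) : cpr α α = 2 := by
  unfold cpr; field_simp

lemma sref_apply (α x : V) : sref α x = x - cpr x α • α := rfl

lemma sref_lin (α : V) : IsLinearMap ℝ (sref α) := by
  constructor
  · intro x y
    simp only [sref_apply, cpr_add, add_smul]
    abel
  · intro c x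
    simp only [sref_apply, cpr_smul, mul_smul, smul_sub]

lemma sref_sref {α : V} (h : ⟪α, α⟫ ≠ 0) (x : V) : sref α (sref α x) = x := by
  have hc : cpr (x - cpr x α • α) α = - cpr x α := by
    rw [cpr_sub, cpr_smul, cpr_self h]; ring
  simp only [sref_apply, hc, neg_smul]
  abel

lemma sref_self {α : V} (h : ⟪α, α⟫ ≠ 0) : sref α α = -α := by
  simp only [sref_apply, cpr_self h]
  module

lemma sref_inner {α : V} (h : ⟪α, α⟫ ≠ 0) (x y : V) :
    ⟪sref α x, sref α y⟫ = ⟪x, y⟫ := by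
  simp only [sref_apply, cpr, inner_sub_left, inner_sub_right, real_inner_smul_left,
    real_inner_smul_right]
  rw [real_inner_comm α x, real_inner_comm α y]
  field_simp
  ring

/-- word function of a list of (simple) roots -/
def Wd (l : List V) : V → V := (l.map sref).foldr (· ∘ ·) id

lemma Wd_nil : Wd ([] : List V) = id := rfl

lemma Wd_cons (a : V) (l : List V) : Wd (a :: l) = sref a ∘ Wd l := rfl

lemma Wd_append (l₁ l₂ : List V) : Wd (l₁ ++ l₂) = Wd l₁ ∘ Wd l₂ := by
  induction l₁ with
  | nil => rfl
  | cons a l ih =>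
      show Wd (a :: (l ++ l₂)) = _
      rw [Wd_cons, ih, Wd_cons]
      rfl

lemma Wd_singleton (a : V) : Wd [a] = sref a := by
  funext x; rfl

/-- the properties of Weyl-group elements we track -/
structure GoodW (Φ : Finset V) (f : V → V) : Prop where
  lin : IsLinearMap ℝ f
  inner : ∀ x y, ⟪f x, f y⟫ = ⟪x, y⟫
  maps : ∀ x ∈ Φ, f x ∈ Φ

lemma GoodW.id (Φ : Finset V) : GoodW Φ (id : V → V) :=
  ⟨⟨fun _ _ => rfl, fun _ _ => rfl⟩, fun _ _ => rfl, fun _ h => h⟩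

lemma GoodW.comp {Φ : Finset V} {f g : V → V} (hf : GoodW Φ f) (hg : GoodW Φ g) :
    GoodW Φ (f ∘ g) := by
  constructor
  · exact ⟨fun x y => by simp [hg.lin.map_add, hf.lin.map_add],
      fun c x => by simp [hg.lin.map_smul, hf.lin.map_smul]⟩
  · intro x y; simp [hf.inner, hg.inner]
  · intro x hx; exact hf.maps _ (hg.maps _ hx)

lemma GoodW.neg {Φ : Finset V} {f : V → V} (hf : GoodW Φ f) (x : V) : f (-x) = - f x := by
  have := hf.lin.map_smul (-1 : ℝ) x
  simpa using this

lemma GoodW.cpr {Φ : Finset V} {f : V → V} (hf : GoodW Φ f) (x y : V) :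
    Pp.cpr (f x) (f y) = Pp.cpr x y := by
  unfold Pp.cpr; rw [hf.inner, hf.inner]

lemma GoodW.norm_eq {Φ : Finset V} {f : V → V} (hf : GoodW Φ f) (x : V) :
    ⟪f x, f x⟫ = ⟪x, x⟫ := hf.inner x x

section RS

variable {Φ Δ : Finset V}

lemma root_ne_zero (hRS : IsRS Φ Δ) {α : V} (hα : α ∈ Φ) : α ≠ 0 := by
  intro h; exact hRS.zero_not_mem (h ▸ hα)

lemma root_inner_ne (hRS : IsRS Φ Δ) {α : V} (hα : α ∈ Φ) : ⟪α, α⟫ ≠ 0 := by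
  simpa using (root_ne_zero hRS hα)

lemma root_inner_pos (hRS : IsRS Φ Δ) {α : V} (hα : α ∈ Φ) : 0 < ⟪α, α⟫ :=
  lt_of_le_of_ne real_inner_self_nonneg (Ne.symm (root_inner_ne hRS hα))

lemma GoodW.sref (hRS : IsRS Φ Δ) {α : V} (hα : α ∈ Φ) : GoodW Φ (sref α) :=
  ⟨sref_lin α, sref_inner (root_inner_ne hRS hα), fun x hx => hRS.refl_mem α hα x hx⟩

lemma GoodW.wd (hRS : IsRS Φ Δ) {l : List V} (hl : ∀ β ∈ l, β ∈ Δ) : GoodW Φ (Wd l) := by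
  induction l with
  | nil => exact GoodW.id Φ
  | cons a l ih =>
      rw [Wd_cons]
      exact (GoodW.sref hRS (hRS.simple_mem a (hl a (List.mem_cons_self)))).comp
        (ih (fun β hβ => hl β (List.mem_cons_of_mem a hβ)))

lemma Wd_inv (hRS : IsRS Φ Δ) {l : List V} (hl : ∀ β ∈ l, β ∈ Δ) :
    Wd l ∘ Wd l.reverse = id ∧ Wd l.reverse ∘ Wd l = id := by
  induction l with
  | nil => exact ⟨rfl, rfl⟩
  | cons a l ih =>
      have ha : a ∈ Φ := hRS.simple_mem a (hl a (List.mem_cons_self))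
      have hl' : ∀ β ∈ l, β ∈ Δ := fun β hβ => hl β (List.mem_cons_of_mem a hβ)
      have ih' := ih hl'
      constructor
      · funext x
        have : Wd (l.reverse ++ [a]) x = Wd l.reverse (sref a x) := by
          rw [Wd_append, Wd_singleton]; rfl
        simp only [List.reverse_cons, Wd_cons, Function.comp_apply, this]
        have h1 : Wd l (Wd l.reverse (sref a x)) = sref a x :=
          congrFun ih'.1 (sref a x)
        rw [h1, sref_sref (root_inner_ne hRS ha)]
        rfl
      · funext x
        simp only [List.reverse_cons, Wd_append, Wd_singleton, Wd_cons, Wd_nil,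
          Function.comp_apply, id_eq]
        rw [sref_sref (root_inner_ne hRS ha)]
        exact congrFun ih'.2 x

end RS

section Pos

variable {Φ Δ : Finset V}

lemma indep_coeff (hRS : IsRS Φ Δ) (c : V → ℝ) (hc : ∑ α ∈ Δ, c α • α = 0) :
    ∀ α ∈ Δ, c α = 0 := by
  intro α hα
  have h := linearIndependent_iff'.mp hRS.simple_indep Finset.univ (fun a => c (a : V)) ?_
    ⟨α, hα⟩ (Finset.mem_univ _)
  · exact h
  · rw [← hc]
    exact (Finset.sum_coe_sort Δ (fun a => c a • a))

lemma coeff_unique (hRS : IsRS Φ Δ) {c d : V → ℝ}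
    (h : ∑ α ∈ Δ, c α • α = ∑ α ∈ Δ, d α • α) : ∀ α ∈ Δ, c α = d α := by
  intro α hα
  have h0 : ∑ α ∈ Δ, (c α - d α) • α = 0 := by
    simp only [sub_smul, Finset.sum_sub_distrib, h, sub_self]
  have := indep_coeff hRS _ h0 α hα
  linarith

/-- nonnegative combination of simple roots of `Δ'` -/
def NN (Δ' : Finset V) (v : V) : Prop :=
  ∃ c : V → ℝ, (∀ α ∈ Δ', 0 ≤ c α) ∧ v = ∑ α ∈ Δ', c α • α

lemma mem_Pos {Δ' : Finset V} {β : V} : β ∈ Pos Φ Δ' ↔ β ∈ Φ ∧ NN Δ' β :=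
  Finset.mem_filter

lemma Pos_sub_Φ {Δ' : Finset V} {β : V} (h : β ∈ Pos Φ Δ') : β ∈ Φ :=
  (mem_Pos.mp h).1

lemma NN_zero (hRS : IsRS Φ Δ) {v : V} (h1 : NN Δ v) (h2 : NN Δ (-v)) : v = 0 := by
  obtain ⟨c, hc, hcv⟩ := h1
  obtain ⟨d, hd, hdv⟩ := h2
  have hsum : ∑ α ∈ Δ, (c α + d α) • α = 0 := by
    simp only [add_smul, Finset.sum_add_distrib, ← hcv, ← hdv]
    abel
  have hz := indep_coeff hRS _ hsum
  have : ∀ α ∈ Δ, c α • α = (0:ℝ) • α := by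
    intro α hα
    have h1 := hz α hα
    have h2 := hc α hα
    have h3 := hd α hα
    have : c α = 0 := by linarith
    rw [this]
  rw [hcv, Finset.sum_congr rfl this]
  simp

lemma pos_neg_excl (hRS : IsRS Φ Δ) {β : V} (h1 : β ∈ Pos Φ Δ) (h2 : -β ∈ Pos Φ Δ) :
    False := by
  have := NN_zero hRS (mem_Pos.mp h1).2 (mem_Pos.mp h2).2
  exact root_ne_zero hRS (Pos_sub_Φ h1) this

lemma pos_dichot (hRS : IsRS Φ Δ) {β : V} (hβ : β ∈ Φ) :
    β ∈ Pos Φ Δ ∨ -β ∈ Pos Φ Δ := hRS.pos_or_neg β hβ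

lemma not_pos_neg (hRS : IsRS Φ Δ) {β : V} (hβ : β ∈ Φ) (h : β ∉ Pos Φ Δ) :
    -β ∈ Pos Φ Δ := (pos_dichot hRS hβ).resolve_left h

lemma sum_ite_single {Δ' : Finset V} {α : V} (hα : α ∈ Δ') (k : ℝ) :
    ∑ x ∈ Δ', (if x = α then k else 0) • x = k • α := by
  simp only [ite_smul, zero_smul]
  rw [Finset.sum_ite_eq' Δ' α (fun x => k • x)]
  simp [hα]

lemma simple_mem_Pos (hRS : IsRS Φ Δ) {α : V} (hα : α ∈ Δ) : α ∈ Pos Φ Δ := by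
  rw [mem_Pos]
  refine ⟨hRS.simple_mem α hα, fun x => if x = α then 1 else 0, fun x _ => by positivity, ?_⟩
  show α = ∑ x ∈ Δ, (if x = α then (1:ℝ) else 0) • x
  rw [sum_ite_single hα 1, one_smul]

/-- key lemma: a simple reflection permutes the positive roots other than itself -/
lemma sref_simple_pos (hRS : IsRS Φ Δ) {α β : V} (hα : α ∈ Δ) (hβ : β ∈ Pos Φ Δ)
    (hne : β ≠ α) : sref α β ∈ Pos Φ Δ := by
  have hαΦ : α ∈ Φ := hRS.simple_mem α hα
  have hβΦ : β ∈ Φ := Pos_sub_Φ hβ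
  have hsΦ : sref α β ∈ Φ := hRS.refl_mem α hαΦ β hβΦ
  by_contra hno
  have hneg : -(sref α β) ∈ Pos Φ Δ := not_pos_neg hRS hsΦ hno
  obtain ⟨c, hc, hcv⟩ := (mem_Pos.mp hβ).2
  obtain ⟨d, hd, hdv⟩ := (mem_Pos.mp hneg).2
  set k : ℝ := cpr β α with hk
  -- β + (-(sref α β)) = k • α
  have hkey : ∑ x ∈ Δ, (c x + d x) • x = ∑ x ∈ Δ, (if x = α then k else 0) • x := by
    rw [sum_ite_single hα k]
    simp only [add_smul, Finset.sum_add_distrib, ← hcv, ← hdv]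
    rw [sref_apply]
    abel
  have hcoeff := coeff_unique hRS hkey
  -- all coefficients of β away from α vanish
  have hczero : ∀ x ∈ Δ, x ≠ α → c x = 0 := by
    intro x hx hxa
    have h1 := hcoeff x hx
    rw [if_neg hxa] at h1
    have h2 := hc x hx
    have h3 := hd x hx
    linarith
  -- hence β is a multiple of α
  have hβα : β = c α • α := by
    rw [hcv]
    rw [Finset.sum_eq_single α]
    · intro b hb hba
      rw [hczero b hb hba, zero_smul]
    · intro h; exact absurd hα h
  have := hRS.reduced α hαΦ (c α) (by rw [← hβα]; exact_mod_cast hβΦ)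
  rcases this with h1 | h1
  · exact hne (by rw [hβα, h1, one_smul])
  · have : -β ∈ Pos Φ Δ := by
      have : -β = α := by rw [hβα, h1]; module
      rw [this]; exact simple_mem_Pos hRS hα
    exact pos_neg_excl hRS hβ this

end Pos

section Length

variable {Φ Δ : Finset V}

/-- inversion set of a function -/
def Nset (Φ Δ : Finset V) (f : V → V) : Finset V :=
  (Pos Φ Δ).filter fun β => -(f β) ∈ Pos Φ Δ

lemma mem_Nset {f : V → V} {β : V} :
    β ∈ Nset Φ Δ f ↔ β ∈ Pos Φ Δ ∧ -(f β) ∈ Pos Φ Δ := Finset.mem_filter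

lemma goodw_conj {f : V → V} (hf : GoodW Φ f) (α : V) :
    f ∘ sref α = sref (f α) ∘ f := by
  funext x
  simp only [Function.comp_apply, sref_apply]
  rw [hf.lin.map_sub, hf.lin.map_smul, hf.cpr]

lemma sref_invol (hRS : IsRS Φ Δ) {α : V} (hα : α ∈ Φ) :
    Function.Involutive (sref α) := fun x => sref_sref (root_inner_ne hRS hα) x

lemma Nset_erase_eq (hRS : IsRS Φ Δ) {v : V → V} {α : V} (hα : α ∈ Δ) :
    (Nset Φ Δ (v ∘ sref α)).erase α = Finset.image (sref α) ((Nset Φ Δ v).erase α) := by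
  have hαΦ := hRS.simple_mem α hα
  have hsq := sref_sref (root_inner_ne hRS hαΦ)
  have hαP := simple_mem_Pos hRS hα
  ext x
  simp only [Finset.mem_erase, Finset.mem_image, mem_Nset, Function.comp_apply]
  constructor
  · rintro ⟨hxα, hx, hvx⟩
    refine ⟨sref α x, ⟨⟨?_, ?_, ?_⟩, hsq x⟩⟩
    · intro h
      have hxeq : x = -α := by
        have := congrArg (sref α) h
        rw [hsq, sref_self (root_inner_ne hRS hαΦ)] at this
        exact this
      refine pos_neg_excl hRS hx ?_
      rw [hxeq, neg_neg]; exact hαP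
    · exact sref_simple_pos hRS hα hx hxα
    · exact hvx
  · rintro ⟨a, ⟨⟨haα, ha, hva⟩, rfl⟩⟩
    refine ⟨?_, sref_simple_pos hRS hα ha haα, ?_⟩
    · intro h
      have : a = -α := by
        have := congrArg (sref α) h
        rw [hsq, sref_self (root_inner_ne hRS hαΦ)] at this
        exact this
      refine pos_neg_excl hRS ha ?_
      rw [this, neg_neg]; exact hαP
    · rw [hsq]; exact hva

lemma Nset_card_step_pos (hRS : IsRS Φ Δ) {v : V → V} (hv : GoodW Φ v) {α : V}
    (hα : α ∈ Δ) (hpos : v α ∈ Pos Φ Δ) :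
    (Nset Φ Δ (v ∘ sref α)).card = (Nset Φ Δ v).card + 1 := by
  have hαΦ := hRS.simple_mem α hα
  have h1 : α ∉ Nset Φ Δ v := by
    rw [mem_Nset]
    rintro ⟨-, h⟩
    exact pos_neg_excl hRS hpos h
  have h2 : α ∈ Nset Φ Δ (v ∘ sref α) := by
    rw [mem_Nset]
    refine ⟨simple_mem_Pos hRS hα, ?_⟩
    show -(v (sref α α)) ∈ Pos Φ Δ
    rw [sref_self (root_inner_ne hRS hαΦ), hv.neg, neg_neg]
    exact hpos
  have hinj : Function.Injective (sref α) := (sref_invol hRS hαΦ).injective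
  have hc1 := Finset.card_erase_add_one h2
  rw [Nset_erase_eq hRS hα, Finset.card_image_of_injective _ hinj,
    Finset.erase_eq_of_notMem h1] at hc1
  omega

lemma Nset_card_step_neg (hRS : IsRS Φ Δ) {v : V → V} (hv : GoodW Φ v) {α : V}
    (hα : α ∈ Δ) (hneg : -(v α) ∈ Pos Φ Δ) :
    (Nset Φ Δ (v ∘ sref α)).card + 1 = (Nset Φ Δ v).card := by
  have hαΦ := hRS.simple_mem α hα
  have h1 : α ∈ Nset Φ Δ v := mem_Nset.mpr ⟨simple_mem_Pos hRS hα, hneg⟩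
  have h2 : α ∉ Nset Φ Δ (v ∘ sref α) := by
    rw [mem_Nset]
    rintro ⟨-, h⟩
    show False
    have heq : -((v ∘ sref α) α) = v α := by
      show -(v (sref α α)) = v α
      rw [sref_self (root_inner_ne hRS hαΦ), hv.neg, neg_neg]
    rw [heq] at h
    exact pos_neg_excl hRS h hneg
  have hinj : Function.Injective (sref α) := (sref_invol hRS hαΦ).injective
  have hc3 : Nset Φ Δ (v ∘ sref α) = Finset.image (sref α) ((Nset Φ Δ v).erase α) := by
    rw [← Nset_erase_eq hRS hα (v := v)]
    exact (Finset.erase_eq_of_notMem h2).symm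
  rw [hc3, Finset.card_image_of_injective _ hinj]
  exact Finset.card_erase_add_one h1

lemma Nset_id_empty (hRS : IsRS Φ Δ) : Nset Φ Δ (id : V → V) = ∅ := by
  rw [Finset.eq_empty_iff_forall_notMem]
  intro x hx
  rw [mem_Nset] at hx
  exact pos_neg_excl hRS hx.1 hx.2

end Length

section Length2

variable {Φ Δ : Finset V}

lemma isWord_iff {w : V → V} {n : ℕ} :
    IsWord Δ w n ↔ ∃ l : List V, l.length = n ∧ (∀ α ∈ l, α ∈ Δ) ∧ w = Wd l := Iff.rfl

lemma wd_isWord {l : List V} (hl : ∀ α ∈ l, α ∈ Δ) : IsWord Δ (Wd l) l.length :=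
  ⟨l, rfl, hl, rfl⟩

lemma wd_mem_weyl {l : List V} (hl : ∀ α ∈ l, α ∈ Δ) : Wd l ∈ Weyl Δ :=
  ⟨l.length, wd_isWord hl⟩

lemma len_le_of_isWord {w : V → V} {n : ℕ} (h : IsWord Δ w n) : len Δ w ≤ n :=
  Nat.sInf_le h

lemma weyl_min_word {w : V → V} (hw : w ∈ Weyl Δ) :
    ∃ l : List V, l.length = len Δ w ∧ (∀ α ∈ l, α ∈ Δ) ∧ w = Wd l := by
  have hne : {n | IsWord Δ w n}.Nonempty := hw
  exact Nat.sInf_mem hne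

lemma weyl_good (hRS : IsRS Φ Δ) {w : V → V} (hw : w ∈ Weyl Δ) : GoodW Φ w := by
  obtain ⟨l, -, hl, rfl⟩ := weyl_min_word hw
  exact GoodW.wd hRS hl

lemma isWord_comp {u v : V → V} {m n : ℕ} (hu : IsWord Δ u m) (hv : IsWord Δ v n) :
    IsWord Δ (u ∘ v) (m + n) := by
  obtain ⟨l₁, h1, hl1, rfl⟩ := hu
  obtain ⟨l₂, h2, hl2, rfl⟩ := hv
  refine ⟨l₁ ++ l₂, ?_, ?_, ?_⟩
  · simp [h1, h2]
  · intro α hα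
    rcases List.mem_append.mp hα with h | h
    · exact hl1 α h
    · exact hl2 α h
  · exact (Wd_append l₁ l₂).symm

lemma weyl_comp {u v : V → V} (hu : u ∈ Weyl Δ) (hv : v ∈ Weyl Δ) : u ∘ v ∈ Weyl Δ := by
  obtain ⟨m, hm⟩ := hu
  obtain ⟨n, hn⟩ := hv
  exact ⟨m + n, isWord_comp hm hn⟩

lemma len_comp_le {u v : V → V} (hu : u ∈ Weyl Δ) (hv : v ∈ Weyl Δ) :
    len Δ (u ∘ v) ≤ len Δ u + len Δ v := by
  obtain ⟨l₁, h1, hl1, rfl⟩ := weyl_min_word hu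
  obtain ⟨l₂, h2, hl2, rfl⟩ := weyl_min_word hv
  have := isWord_comp (wd_isWord hl1) (wd_isWord hl2)
  have h := len_le_of_isWord this
  omega

lemma weyl_mono {Δ' : Finset V} (hsub : Δ' ⊆ Δ) {w : V → V} (hw : w ∈ Weyl Δ') :
    w ∈ Weyl Δ := by
  obtain ⟨n, l, hn, hl, rfl⟩ := hw
  exact ⟨n, l, hn, fun α hα => hsub (hl α hα), rfl⟩

/-- any two-sided inverse of a Weyl element is the reversed word -/
lemma inv_weyl (hRS : IsRS Φ Δ) {a b : V → V} (hb : b ∈ Weyl Δ)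
    (h1 : a ∘ b = id) (h2 : b ∘ a = id) : a ∈ Weyl Δ ∧ len Δ a ≤ len Δ b := by
  obtain ⟨l, hlen, hl, rfl⟩ := weyl_min_word hb
  have hrev : ∀ α ∈ l.reverse, α ∈ Δ := fun α hα => hl α (List.mem_reverse.mp hα)
  have hid := (Wd_inv hRS hl).1
  have ha : a = Wd l.reverse := by
    have : a ∘ (Wd l ∘ Wd l.reverse) = a := by rw [hid]; rfl
    calc a = a ∘ (Wd l ∘ Wd l.reverse) := this.symm
    _ = (a ∘ Wd l) ∘ Wd l.reverse := rfl
    _ = Wd l.reverse := by rw [h1]; rfl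
  rw [ha]
  refine ⟨wd_mem_weyl hrev, ?_⟩
  have := len_le_of_isWord (wd_isWord hrev)
  simpa [hlen] using this

lemma len_inv_eq (hRS : IsRS Φ Δ) {a b : V → V} (ha : a ∈ Weyl Δ) (hb : b ∈ Weyl Δ)
    (h1 : a ∘ b = id) (h2 : b ∘ a = id) : len Δ a = len Δ b :=
  le_antisymm (inv_weyl hRS hb h1 h2).2 (inv_weyl hRS ha h2 h1).2

lemma nat_ivt {P : ℕ → Prop} : ∀ n, ¬ P 0 → P n → ∃ k, k < n ∧ ¬ P k ∧ P (k + 1) := by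
  intro n
  induction n with
  | zero => intro h0 hn; exact absurd hn h0
  | succ n ih =>
      intro h0 hn
      by_cases hPn : P n
      · obtain ⟨k, hk, h1, h2⟩ := ih h0 hPn
        exact ⟨k, by omega, h1, h2⟩
      · exact ⟨n, by omega, hPn, hn⟩

/-- exchange lemma -/
lemma exchange (hRS : IsRS Φ Δ) {l : List V} (hl : ∀ β ∈ l, β ∈ Δ) {α : V} (hα : α ∈ Δ)
    (hneg : -(Wd l α) ∈ Pos Φ Δ) :
    ∃ l' : List V, (∀ β ∈ l', β ∈ Δ) ∧ l'.length + 1 = l.length ∧ Wd l' = Wd l ∘ sref α := by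
  have hαP := simple_mem_Pos hRS hα
  set P : ℕ → Prop := fun k => Wd (l.drop k) α ∈ Pos Φ Δ with hP
  have hP0 : ¬ P 0 := by
    simp only [hP, List.drop_zero]
    intro h
    exact pos_neg_excl hRS h hneg
  have hPn : P l.length := by
    simp only [hP, List.drop_length]
    exact hαP
  obtain ⟨k, hk, h1, h2⟩ := nat_ivt l.length hP0 hPn
  have hdrop : l.drop k = l[k] :: l.drop (k + 1) := List.drop_eq_getElem_cons hk
  set β := l[k] with hβ
  have hβΔ : β ∈ Δ := hl β (List.getElem_mem hk)
  set v := Wd (l.drop (k + 1)) with hv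
  have hvgood : GoodW Φ v := GoodW.wd hRS (fun x hx => hl x (List.drop_subset _ l hx))
  have hvα : v α = β := by
    by_contra hne
    have := sref_simple_pos hRS hβΔ h2 hne
    apply h1
    show Wd (l.drop k) α ∈ Pos Φ Δ
    rw [hdrop, Wd_cons]
    exact this
  -- v ∘ sref α = sref β ∘ v
  have hconj : v ∘ sref α = sref β ∘ v := by
    rw [goodw_conj hvgood α, hvα]
  refine ⟨l.take k ++ l.drop (k + 1), ?_, ?_, ?_⟩
  · intro x hx
    rcases List.mem_append.mp hx with h | h
    · exact hl x (List.take_subset _ l h)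
    · exact hl x (List.drop_subset _ l h)
  · rw [List.length_append, List.length_take, List.length_drop]
    omega
  · have hsplit : Wd l = Wd (l.take k) ∘ Wd (l.drop k) := by
      rw [← Wd_append, List.take_append_drop]
    rw [Wd_append, hsplit, hdrop, Wd_cons]
    funext x
    show Wd (l.take k) (v x) = Wd (l.take k) (sref β (v (sref α x)))
    have hx : v (sref α x) = sref β (v x) := congrFun hconj x
    rw [hx, sref_sref (root_inner_ne hRS (hRS.simple_mem β hβΔ))]

end Length2

section Length3

variable {Φ Δ : Finset V}

lemma sref_simple_weyl {α : V} (hα : α ∈ Δ) : sref α ∈ Weyl Δ := by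
  rw [← Wd_singleton]
  exact wd_mem_weyl (fun x hx => by rw [List.mem_singleton.mp hx]; exact hα)

lemma len_sref_le {α : V} (hα : α ∈ Δ) : len Δ (sref α) ≤ 1 := by
  rw [← Wd_singleton]
  exact len_le_of_isWord (wd_isWord (fun x hx => by rw [List.mem_singleton.mp hx]; exact hα))

lemma len_exchange (hRS : IsRS Φ Δ) {w : V → V} (hw : w ∈ Weyl Δ) {α : V} (hα : α ∈ Δ)
    (hneg : -(w α) ∈ Pos Φ Δ) : len Δ (w ∘ sref α) + 1 ≤ len Δ w := by
  obtain ⟨l, hlen, hl, rfl⟩ := weyl_min_word hw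
  obtain ⟨l', hl', hlen', heq⟩ := exchange hRS hl hα hneg
  have h2 : IsWord Δ (Wd l ∘ sref α) l'.length := heq ▸ wd_isWord hl'
  have := len_le_of_isWord h2
  omega

lemma len_eq_card_aux (hRS : IsRS Φ Δ) :
    ∀ n : ℕ, ∀ w : V → V, w ∈ Weyl Δ → len Δ w = n → (Nset Φ Δ w).card = n := by
  intro n
  induction n using Nat.strong_induction_on with
  | _ n ih =>
    intro w hw hlen
    obtain ⟨l, hlenl, hl, rfl⟩ := weyl_min_word hw
    rcases l.eq_nil_or_concat with rfl | ⟨l₀, β, hconc⟩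
    · have hn : n = 0 := by
        rw [← hlen, ← hlenl]; rfl
      rw [hn]
      have : Wd ([] : List V) = (id : V → V) := rfl
      rw [this, Nset_id_empty hRS]; rfl
    · rw [List.concat_eq_append] at hconc
      subst hconc
      have hβΔ : β ∈ Δ := hl β (by simp)
      have hl₀ : ∀ x ∈ l₀, x ∈ Δ := fun x hx => hl x (List.mem_append_left _ hx)
      have hwu : Wd (l₀ ++ [β]) = Wd l₀ ∘ sref β := by rw [Wd_append, Wd_singleton]
      have hlu : len Δ (Wd l₀) ≤ l₀.length := len_le_of_isWord (wd_isWord hl₀)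
      have hn1 : l₀.length + 1 = n := by
        rw [← hlen, ← hlenl]; simp
      have hup : len Δ (Wd (l₀ ++ [β])) ≤ len Δ (Wd l₀) + 1 := by
        rw [hwu]
        calc len Δ (Wd l₀ ∘ sref β) ≤ len Δ (Wd l₀) + len Δ (sref β) :=
              len_comp_le (wd_mem_weyl hl₀) (sref_simple_weyl hβΔ)
        _ ≤ len Δ (Wd l₀) + 1 := by have := len_sref_le hβΔ; omega
      have hlu' : len Δ (Wd l₀) = n - 1 := by omega
      have hcard : (Nset Φ Δ (Wd l₀)).card = n - 1 :=
        ih (n - 1) (by omega) (Wd l₀) (wd_mem_weyl hl₀) hlu'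
      have hgood : GoodW Φ (Wd l₀) := GoodW.wd hRS hl₀
      have hβΦ : Wd l₀ β ∈ Φ := hgood.maps β (hRS.simple_mem β hβΔ)
      rcases pos_dichot hRS hβΦ with hpos | hneg
      · rw [hwu, Nset_card_step_pos hRS hgood hβΔ hpos, hcard]
        omega
      · exfalso
        have := len_exchange hRS (wd_mem_weyl hl₀) hβΔ hneg
        rw [← hwu] at this
        rw [hlen] at *
        omega

lemma len_eq_card (hRS : IsRS Φ Δ) {w : V → V} (hw : w ∈ Weyl Δ) :
    (Nset Φ Δ w).card = len Δ w := len_eq_card_aux hRS _ w hw rfl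

lemma NN_add {Δ' : Finset V} {v w : V} (hv : NN Δ' v) (hw : NN Δ' w) : NN Δ' (v + w) := by
  obtain ⟨c, hc, rfl⟩ := hv
  obtain ⟨d, hd, rfl⟩ := hw
  exact ⟨fun x => c x + d x, fun x hx => add_nonneg (hc x hx) (hd x hx), by
    simp [add_smul, Finset.sum_add_distrib]⟩

lemma NN_smul {Δ' : Finset V} {t : ℝ} (ht : 0 ≤ t) {v : V} (hv : NN Δ' v) :
    NN Δ' (t • v) := by
  obtain ⟨c, hc, rfl⟩ := hv
  exact ⟨fun x => t * c x, fun x hx => mul_nonneg ht (hc x hx), by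
    rw [Finset.smul_sum]
    exact Finset.sum_congr rfl fun x _ => by rw [mul_smul]⟩

lemma NN_simple {Δ' : Finset V} {α : V} (hα : α ∈ Δ') : NN Δ' α :=
  ⟨fun x => if x = α then 1 else 0, fun x _ => by positivity, by rw [sum_ite_single hα 1, one_smul]⟩

/-- reflections in positive roots are Weyl group elements -/
lemma sref_weyl_aux (hRS : IsRS Φ Δ) :
    ∀ n : ℕ, ∀ γ : V, γ ∈ Pos Φ Δ → (Nset Φ Δ (sref γ)).card = n → sref γ ∈ Weyl Δ := by
  intro n
  induction n using Nat.strong_induction_on with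
  | _ n ih =>
    intro γ hγ hcard
    by_cases hγΔ : γ ∈ Δ
    · exact sref_simple_weyl hγΔ
    obtain ⟨c, hc, hcv⟩ := (mem_Pos.mp hγ).2
    have hγΦ := Pos_sub_Φ hγ
    have hposγ : (0:ℝ) < ⟪γ, γ⟫ := root_inner_pos hRS hγΦ
    have hgg : ⟪γ, γ⟫ = ∑ α ∈ Δ, c α * ⟪α, γ⟫ := by
      nth_rewrite 1 [hcv]
      rw [sum_inner]
      exact Finset.sum_congr rfl fun α _ => real_inner_smul_left _ _ _
    have hex : ∃ α ∈ Δ, 0 < ⟪α, γ⟫ := by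
      by_contra hno
      push_neg at hno
      have : ⟪γ, γ⟫ ≤ 0 := by
        rw [hgg]
        refine Finset.sum_nonpos fun α hα => mul_nonpos_of_nonneg_of_nonpos (hc α hα) (hno α hα)
      linarith
    obtain ⟨α, hαΔ, hαγ⟩ := hex
    have hαΦ := hRS.simple_mem α hαΔ
    have hne : γ ≠ α := fun h => hγΔ (h ▸ hαΔ)
    set c2 := cpr α γ with hc2def
    have hc2pos : 0 < c2 := by
      rw [hc2def]
      unfold cpr
      positivity
    set γ' := sref α γ with hγ'def
    have hγ'P : γ' ∈ Pos Φ Δ := sref_simple_pos hRS hαΔ hγ hne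
    have hγ'Φ := Pos_sub_Φ hγ'P
    have hconj : sref α ∘ sref γ = sref γ' ∘ sref α := goodw_conj (GoodW.sref hRS hαΦ) γ
    have hsγ : sref γ = sref α ∘ (sref γ' ∘ sref α) := by
      funext x
      have h1 := congrFun hconj x
      simp only [Function.comp_apply] at h1
      have h2 := congrArg (sref α) h1
      rw [sref_sref (root_inner_ne hRS hαΦ)] at h2
      exact h2
    have hsγα : sref γ α = α - c2 • γ := rfl
    -- sref γ α is not positive
    have hkey : sref γ α ∉ Pos Φ Δ := by
      intro hmem
      obtain ⟨d, hd, hdv⟩ := (mem_Pos.mp hmem).2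
      have hα_eq : ∑ x ∈ Δ, (d x + c2 * c x) • x = ∑ x ∈ Δ, (if x = α then (1:ℝ) else 0) • x := by
        rw [sum_ite_single hαΔ 1, one_smul]
        have : ∑ x ∈ Δ, (d x + c2 * c x) • x
            = (∑ x ∈ Δ, d x • x) + c2 • ∑ x ∈ Δ, c x • x := by
          rw [Finset.smul_sum, ← Finset.sum_add_distrib]
          exact Finset.sum_congr rfl fun x _ => by rw [add_smul, mul_smul]
        rw [this, ← hdv, ← hcv, hsγα]
        module
      have hcoeff := coeff_unique hRS hα_eq
      have hczero : ∀ x ∈ Δ, x ≠ α → c x = 0 := by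
        intro x hx hxa
        have h1 := hcoeff x hx
        rw [if_neg hxa] at h1
        have h2 := hd x hx
        have h3 := hc x hx
        nlinarith
      have hγα : γ = c α • α := by
        rw [hcv]
        exact Finset.sum_eq_single α (fun b hb hba => by rw [hczero b hb hba, zero_smul])
          (fun h => absurd hαΔ h)
      rcases hRS.reduced α hαΦ (c α) (by rw [← hγα]; exact Finset.mem_coe.mpr hγΦ) with h | h
      · exact hne (by rw [hγα, h, one_smul])
      · refine pos_neg_excl hRS hγ ?_
        have : -γ = α := by rw [hγα, h]; module
        rw [this]
        exact simple_mem_Pos hRS hαΔ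
    have hαN : α ∈ Nset Φ Δ (sref γ) :=
      mem_Nset.mpr ⟨simple_mem_Pos hRS hαΔ,
        not_pos_neg hRS (hRS.refl_mem γ hγΦ α hαΦ) hkey⟩
    -- α is not an inversion of sref γ'
    have hαN' : α ∉ Nset Φ Δ (sref γ') := by
      rw [mem_Nset]
      rintro ⟨-, hneg⟩
      have h1 : cpr α γ' = - c2 := by
        have hneg1 : sref α (-α) = α := by
          rw [(sref_lin α).map_neg, sref_self (root_inner_ne hRS hαΦ), neg_neg]
        calc cpr α γ' = cpr (sref α (-α)) (sref α γ) := by rw [hneg1]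
        _ = cpr (-α) γ := (GoodW.sref hRS hαΦ).cpr (-α) γ
        _ = - cpr α γ := by unfold cpr; rw [inner_neg_left]; ring
      have h2 : sref γ' α = α + c2 • γ' := by
        rw [sref_apply, h1, neg_smul, sub_neg_eq_add]
      have h3 : sref γ' α ∈ Pos Φ Δ := by
        rw [mem_Pos]
        refine ⟨hRS.refl_mem γ' hγ'Φ α hαΦ, ?_⟩
        rw [h2]
        exact NN_add (NN_simple hαΔ) (NN_smul (le_of_lt hc2pos) (mem_Pos.mp hγ'P).2)
      exact pos_neg_excl hRS h3 hneg
    -- the injection from Nset (sref γ') into (Nset (sref γ)).erase α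
    have hinj : ∀ β ∈ Nset Φ Δ (sref γ'), sref α β ∈ (Nset Φ Δ (sref γ)).erase α := by
      intro β hβN
      obtain ⟨hβP, hβneg⟩ := mem_Nset.mp hβN
      have hβα : β ≠ α := by
        intro h
        exact hαN' (h ▸ hβN)
      have hsβP : sref α β ∈ Pos Φ Δ := sref_simple_pos hRS hαΔ hβP hβα
      rw [Finset.mem_erase, mem_Nset]
      refine ⟨?_, hsβP, ?_⟩
      · intro h
        have hβeq : β = -α := by
          have := congrArg (sref α) h
          rw [sref_sref (root_inner_ne hRS hαΦ), sref_self (root_inner_ne hRS hαΦ)] at this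
          exact this
        refine pos_neg_excl hRS hβP ?_
        rw [hβeq, neg_neg]
        exact simple_mem_Pos hRS hαΔ
      · set y := sref γ (sref α β) with hydef
        have hyΦ : y ∈ Φ := hRS.refl_mem γ hγΦ _ (hRS.refl_mem α hαΦ β (Pos_sub_Φ hβP))
        rcases pos_dichot hRS hyΦ with hyP | hyN
        · exfalso
          have hrel : sref α y = sref γ' β := by
            have h := congrFun hconj (sref α β)
            simp only [Function.comp_apply] at h
            rw [sref_sref (root_inner_ne hRS hαΦ)] at h
            exact h
          by_cases hyα : y = α
          · -- then sref α β = sref γ α, contradicting hkey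
            apply hkey
            have : sref γ y = sref α β := sref_sref (root_inner_ne hRS hγΦ) _
            rw [hyα] at this
            rw [this]
            exact hsβP
          · have : sref α y ∈ Pos Φ Δ := sref_simple_pos hRS hαΔ hyP hyα
            rw [hrel] at this
            exact pos_neg_excl hRS this hβneg
        · exact hyN
    have hsub : Finset.image (sref α) (Nset Φ Δ (sref γ')) ⊆ (Nset Φ Δ (sref γ)).erase α := by
      intro x hx
      obtain ⟨β, hβ, rfl⟩ := Finset.mem_image.mp hx
      exact hinj β hβ
    have hlt : (Nset Φ Δ (sref γ')).card < n := by
      have h1 : (Nset Φ Δ (sref γ')).card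
          = (Finset.image (sref α) (Nset Φ Δ (sref γ'))).card :=
        (Finset.card_image_of_injective _ (sref_invol hRS hαΦ).injective).symm
      have h2 := Finset.card_le_card hsub
      have h3 := Finset.card_erase_lt_of_mem hαN
      omega
    have hW' : sref γ' ∈ Weyl Δ := ih _ hlt γ' hγ'P rfl
    rw [hsγ]
    exact weyl_comp (sref_simple_weyl hαΔ) (weyl_comp hW' (sref_simple_weyl hαΔ))

lemma sref_weyl (hRS : IsRS Φ Δ) {γ : V} (hγ : γ ∈ Pos Φ Δ) : sref γ ∈ Weyl Δ :=
  sref_weyl_aux hRS _ γ hγ rfl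

end Length3

section Additivity

variable {Φ Δ : Finset V}

lemma additivity (hRS : IsRS Φ Δ) {u v : V → V} (hu : u ∈ Weyl Δ) (hv : v ∈ Weyl Δ)
    (hL : len Δ (u ∘ v) = len Δ u + len Δ v) :
    ∀ β ∈ Nset Φ Δ v, β ∈ Nset Φ Δ (u ∘ v) := by
  have hugood := weyl_good hRS hu
  have hvgood := weyl_good hRS hv
  obtain ⟨l, hlenl, hl, hveq⟩ := weyl_min_word hv
  set v' : V → V := Wd l.reverse with hv'def
  have hrev : ∀ α ∈ l.reverse, α ∈ Δ := fun α hα => hl α (List.mem_reverse.mp hα)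
  have hv'good : GoodW Φ v' := GoodW.wd hRS hrev
  have hvv' : ∀ x, v (v' x) = x := by
    intro x
    rw [hveq]
    exact congrFun (Wd_inv hRS hl).1 x
  have hv'v : ∀ x, v' (v x) = x := by
    intro x
    rw [hveq]
    exact congrFun (Wd_inv hRS hl).2 x
  have hvinj : Function.Injective v := Function.LeftInverse.injective hv'v
  have hvΦ : ∀ x ∈ Φ, v x ∈ Φ := hvgood.maps
  set A := (Nset Φ Δ v).filter (fun β => u (v β) ∈ Pos Φ Δ) with hAdef
  set B := (Pos Φ Δ).filter (fun β => v β ∈ Pos Φ Δ ∧ -(u (v β)) ∈ Pos Φ Δ) with hBdef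
  have hAsub : A ⊆ Nset Φ Δ v := Finset.filter_subset _ _
  -- decomposition of Nset (u ∘ v)
  have hNuv : Nset Φ Δ (u ∘ v) = ((Nset Φ Δ v) \ A) ∪ B := by
    ext β
    simp only [mem_Nset, Finset.mem_union, Finset.mem_sdiff, hAdef, hBdef,
      Finset.mem_filter, Function.comp_apply]
    constructor
    · rintro ⟨hβP, hβuv⟩
      have hvβΦ : v β ∈ Φ := hvΦ β (Pos_sub_Φ hβP)
      rcases pos_dichot hRS hvβΦ with hp | hn
      · exact Or.inr ⟨hβP, hp, hβuv⟩
      · refine Or.inl ⟨⟨hβP, hn⟩, ?_⟩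
        rintro ⟨-, habs⟩
        exact pos_neg_excl hRS habs hβuv
    · rintro (⟨⟨hβP, hβn⟩, hnA⟩ | ⟨hβP, hvβP, hβuv⟩)
      · refine ⟨hβP, ?_⟩
        have hvβΦ : v β ∈ Φ := by
          have : -(v β) ∈ Φ := Pos_sub_Φ hβn
          have h2 := hRS.neg_mem _ this
          rwa [neg_neg] at h2
        have huvΦ : u (v β) ∈ Φ := hugood.maps _ hvβΦ
        rcases pos_dichot hRS huvΦ with hp | hn2
        · exact absurd ⟨⟨hβP, hβn⟩, hp⟩ hnA
        · exact hn2
      · exact ⟨hβP, hβuv⟩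
  have hdisj : Disjoint ((Nset Φ Δ v) \ A) B := by
    rw [Finset.disjoint_left]
    intro β h1 h2
    rw [Finset.mem_sdiff, mem_Nset] at h1
    rw [hBdef, Finset.mem_filter] at h2
    exact pos_neg_excl hRS h2.2.1 h1.1.2
  -- decomposition of Nset u
  have hNu : Nset Φ Δ u = (A.image fun β => -(v β)) ∪ (B.image v) := by
    ext x
    simp only [mem_Nset, Finset.mem_union, Finset.mem_image, hAdef, hBdef,
      Finset.mem_filter]
    constructor
    · rintro ⟨hxP, hxu⟩
      have hxΦ : x ∈ Φ := Pos_sub_Φ hxP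
      have hyΦ : v' x ∈ Φ := hv'good.maps x hxΦ
      rcases pos_dichot hRS hyΦ with hp | hn
      · refine Or.inr ⟨v' x, ⟨hp, ?_, ?_⟩, hvv' x⟩
        · rw [hvv' x]; exact hxP
        · rw [hvv' x]; exact hxu
      · have hvβ : v (-(v' x)) = -x := by rw [hvgood.neg, hvv' x]
        refine Or.inl ⟨-(v' x), ⟨⟨hn, ?_⟩, ?_⟩, ?_⟩
        · rw [hvβ, neg_neg]; exact hxP
        · rw [hvβ, hugood.neg]; exact hxu
        · rw [hvβ, neg_neg]
    · rintro (⟨β, ⟨hβN, hβA⟩, rfl⟩ | ⟨β, ⟨hβP, hvβP, hβuv⟩, rfl⟩)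
      · refine ⟨hβN.2, ?_⟩
        rw [hugood.neg, neg_neg]
        exact hβA
      · exact ⟨hvβP, hβuv⟩
  have hdisj2 : Disjoint (A.image fun β => -(v β)) (B.image v) := by
    rw [Finset.disjoint_left]
    rintro x h1 h2
    obtain ⟨β, hβ, rfl⟩ := Finset.mem_image.mp h1
    obtain ⟨β', hβ', heq⟩ := Finset.mem_image.mp h2
    have hsum : v (β + β') = v 0 := by
      rw [hvgood.lin.map_add, hvgood.lin.map_zero, heq]
      abel
    have h0 : β + β' = 0 := hvinj hsum
    have hβ'' : β' = -β := eq_neg_of_add_eq_zero_right h0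
    have hβP : β ∈ Pos Φ Δ := (mem_Nset.mp (hAsub hβ)).1
    have hβ'P : β' ∈ Pos Φ Δ := (Finset.mem_filter.mp hβ').1
    rw [hβ''] at hβ'P
    exact pos_neg_excl hRS hβP hβ'P
  -- counting
  have hcard1 : (Nset Φ Δ (u ∘ v)).card = ((Nset Φ Δ v) \ A).card + B.card := by
    rw [hNuv, Finset.card_union_of_disjoint hdisj]
  have hcard2 : ((Nset Φ Δ v) \ A).card + A.card = (Nset Φ Δ v).card :=
    Finset.card_sdiff_add_card_eq_card hAsub
  have hninj : Function.Injective (fun β : V => -(v β)) := fun a b h => by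
    have : -(v a) = -(v b) := h
    exact hvinj (neg_injective this)
  have hcard3 : (Nset Φ Δ u).card = A.card + B.card := by
    rw [hNu, Finset.card_union_of_disjoint hdisj2,
      Finset.card_image_of_injective _ hninj,
      Finset.card_image_of_injective _ hvinj]
  have hluv := len_eq_card hRS (weyl_comp hu hv)
  have hlu := len_eq_card hRS hu
  have hlv := len_eq_card hRS hv
  have hA0 : A.card = 0 := by omega
  have hAempty : A = ∅ := Finset.card_eq_zero.mp hA0
  intro β hβ
  rw [mem_Nset] at hβ
  rw [mem_Nset]
  refine ⟨hβ.1, ?_⟩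
  show -(u (v β)) ∈ Pos Φ Δ
  have hvβΦ : v β ∈ Φ := by
    have h1 : -(v β) ∈ Φ := Pos_sub_Φ hβ.2
    have h2 := hRS.neg_mem _ h1
    rwa [neg_neg] at h2
  have huvΦ : u (v β) ∈ Φ := hugood.maps _ hvβΦ
  rcases pos_dichot hRS huvΦ with hp | hn
  · exfalso
    have hmem : β ∈ A := Finset.mem_filter.mpr ⟨mem_Nset.mpr hβ, hp⟩
    rw [hAempty] at hmem
    exact absurd hmem (Finset.notMem_empty β)
  · exact hn

end Additivity

section Endgame

variable {Φ Δ : Finset V}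

/-- minuscule bound: the ι-coefficient of the coroot of any root is at most 1,
phrased via root coefficients -/
lemma minuscule_bound (hRS : IsRS Φ Δ) {ι : V} (hι : ι ∈ Δ) (hmin : Minuscule Φ Δ ι)
    {x : V} (hx : x ∈ Φ) {c : V → ℝ} (hc : x = ∑ α ∈ Δ, c α • α) :
    c ι * ⟪ι, ι⟫ ≤ ⟪x, x⟫ := by
  have hxx : (0:ℝ) < ⟪x, x⟫ := root_inner_pos hRS hx
  set c' : V → ℝ := fun α => c α * ⟪α, α⟫ / ⟪x, x⟫ with hc'def
  have hid : (2 / ⟪x, x⟫) • x = ∑ α ∈ Δ, c' α • ((2 / ⟪α, α⟫) • α) := by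
    have hstep : ∑ α ∈ Δ, c' α • ((2 / ⟪α, α⟫) • α) = (2 / ⟪x, x⟫) • ∑ α ∈ Δ, c α • α := by
      rw [Finset.smul_sum]
      refine Finset.sum_congr rfl fun α hα => ?_
      have hαα : ⟪α, α⟫ ≠ 0 := root_inner_ne hRS (hRS.simple_mem α hα)
      rw [smul_smul, smul_smul, hc'def]
      congr 1
      field_simp
    rw [hstep, ← hc]
  have := hmin x hx c' hid
  have hιι : (0:ℝ) < ⟪ι, ι⟫ := root_inner_pos hRS (hRS.simple_mem ι hι)
  rw [hc'def] at this
  simp only at this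
  rw [div_le_one hxx] at this
  exact this

/-- a root with vanishing ι-coefficient lies in the parabolic positive system -/
lemma mem_Pos_erase (hRS : IsRS Φ Δ) {ι z : V} (hι : ι ∈ Δ) (hz : z ∈ Φ)
    {c : V → ℝ} (hc0 : ∀ α ∈ Δ, 0 ≤ c α) (hceq : z = ∑ α ∈ Δ, c α • α)
    (hcι : c ι = 0) : z ∈ Pos Φ (Δ.erase ι) := by
  rw [mem_Pos]
  refine ⟨hz, c, fun α hα => hc0 α (Finset.mem_of_mem_erase hα), ?_⟩
  have h : ∑ α ∈ Δ.erase ι, c α • α = ∑ α ∈ Δ, c α • α := by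
    rw [← Finset.sum_erase_add Δ _ hι, hcι, zero_smul, add_zero]
  rw [hceq, h]

/-- elements of the sub-parabolic positive system are orthogonal to γ -/
lemma Qperp (hRS : IsRS Φ Δ) {ι γ v : V} (hγ : ⟪γ, γ⟫ ≠ 0)
    (hv : v ∈ Pos Φ ((Δ.erase ι).filter fun j => cpr j γ = 0)) : ⟪v, γ⟫ = 0 := by
  obtain ⟨-, c, -, hceq⟩ := mem_Pos.mp hv
  rw [hceq, sum_inner]
  refine Finset.sum_eq_zero fun j hj => ?_
  have hjγ : cpr j γ = 0 := (Finset.mem_filter.mp hj).2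
  have : ⟪j, γ⟫ = 0 := by
    have h2 : 2 * ⟪j, γ⟫ / ⟪γ, γ⟫ = 0 := hjγ
    rcases div_eq_zero_iff.mp h2 with h3 | h3
    · linarith
    · exact absurd h3 hγ
  rw [real_inner_smul_left, this, mul_zero]

/-- the highest root is dominant -/
lemma highest_dominant (hRS : IsRS Φ Δ) {θ : V} (hθ : IsHighest Φ Δ θ) :
    ∀ α ∈ Δ, 0 ≤ ⟪θ, α⟫ := by
  intro α hα
  by_contra hlt
  push_neg at hlt
  have hαΦ := hRS.simple_mem α hα
  have hθΦ : θ ∈ Φ := Pos_sub_Φ hθ.1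
  have hm : cpr θ α < 0 :=
    div_neg_of_neg_of_pos (by linarith) (root_inner_pos hRS hαΦ)
  obtain ⟨c, hc0, hceq⟩ := hθ.2 (sref α θ) (hRS.refl_mem α hαΦ θ hθΦ)
  have hkey : ∑ x ∈ Δ, c x • x = ∑ x ∈ Δ, (if x = α then cpr θ α else 0) • x := by
    rw [sum_ite_single hα (cpr θ α), ← hceq, sref_apply]
    abel
  have := coeff_unique hRS hkey α hα
  rw [if_pos rfl] at this
  have := hc0 α hα
  linarith

end Endgame

section TypeBC

variable {Φ Δ : Finset V}

lemma on_inner {n : ℕ} {e : Fin n → V} (he : Orthonormal ℝ e) (i j : Fin n) :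
    ⟪e i, e j⟫ = if i = j then 1 else 0 := orthonormal_iff_ite.mp he i j

lemma nrm_one {n : ℕ} {e : Fin n → V} (he : Orthonormal ℝ e) (i : Fin n) :
    ⟪e i, e i⟫ = 1 := by
  rw [on_inner he, if_pos rfl]

lemma nrm_sub {n : ℕ} {e : Fin n → V} (he : Orthonormal ℝ e) {i j : Fin n} (hij : i ≠ j) :
    ⟪e i - e j, e i - e j⟫ = 2 := by
  simp only [inner_sub_left, inner_sub_right, on_inner he, if_pos rfl, if_neg hij,
    if_neg hij.symm]
  norm_num

lemma nrm_add {n : ℕ} {e : Fin n → V} (he : Orthonormal ℝ e) {i j : Fin n} (hij : i ≠ j) :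
    ⟪e i + e j, e i + e j⟫ = 2 := by
  simp only [inner_add_left, inner_add_right, on_inner he, if_pos rfl, if_neg hij,
    if_neg hij.symm]
  norm_num

lemma nrm_two {n : ℕ} {e : Fin n → V} (he : Orthonormal ℝ e) (i : Fin n) :
    ⟪(2:ℝ) • e i, (2:ℝ) • e i⟫ = 4 := by
  rw [real_inner_smul_left, real_inner_smul_right, nrm_one he]
  norm_num

lemma ne_of_nrm {x y : V} (h : ⟪x, x⟫ ≠ ⟪y, y⟫) : x ≠ y := fun he => h (by rw [he])

lemma gamma_facts (hRS : IsRS Φ Δ) {ι γ : V} (hι : ι ∈ Δ)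
    (hγ : DistinguishedGamma Φ Δ ι γ) :
    γ ∈ Pos Φ Δ ∧ (∀ x ∈ Φ, ⟪x, x⟫ ≤ ⟪γ, γ⟫) ∧
      (∃ c : V → ℝ, (∀ α ∈ Δ, 0 ≤ c α) ∧ γ = ∑ α ∈ Δ, c α • α ∧ c ι * ⟪ι, ι⟫ = ⟪γ, γ⟫) := by
  rcases hγ with ⟨hSL, rfl⟩ | ⟨n, hn, e, ⟨he, hΦ, hΔ⟩, hιeq, hγeq⟩ |
    ⟨n, hn, e, ⟨he, hΦ, hΔ⟩, hιeq, hγeq⟩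
  · -- simply laced
    refine ⟨simple_mem_Pos hRS hι, ?_, ?_⟩
    · intro x hx
      exact le_of_eq (hSL x hx γ (hRS.simple_mem γ hι))
    · refine ⟨fun x => if x = γ then (1:ℝ) else 0, fun x _ => by positivity, ?_, ?_⟩
      · rw [sum_ite_single hι 1, one_smul]
      · show (if γ = γ then (1:ℝ) else 0) * ⟪γ, γ⟫ = ⟪γ, γ⟫
        rw [if_pos rfl, one_mul]
  · -- type B
    set i1 : Fin n := ⟨n - 2, by omega⟩ with hi1
    set i2 : Fin n := ⟨n - 1, by omega⟩ with hi2
    have h12 : i1 ≠ i2 := by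
      intro h
      have := congrArg Fin.val h
      simp only [hi1, hi2] at this
      omega
    have hγe : γ = e i1 + e i2 := hγeq
    have hιe : ι = e i2 := hιeq
    have hγΦ : γ ∈ Φ := by
      rw [← Finset.mem_coe, hΦ]
      exact Or.inl ⟨i1, i2, h12, Or.inr (Or.inl hγe)⟩
    have hγγ : ⟪γ, γ⟫ = 2 := by rw [hγe]; exact nrm_add he h12
    have hbound : ∀ x ∈ Φ, ⟪x, x⟫ ≤ ⟪γ, γ⟫ := by
      intro x hx
      rw [hγγ]
      rw [← Finset.mem_coe, hΦ] at hx
      rcases hx with ⟨i, j, hij, rfl | rfl | rfl⟩ | ⟨i, rfl | rfl⟩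
      · rw [nrm_sub he hij]
      · rw [nrm_add he hij]
      · rw [inner_neg_neg, nrm_add he hij]
      · rw [nrm_one he]; norm_num
      · rw [inner_neg_neg, nrm_one he]; norm_num
    -- the simple root α1 = e i1 - e i2
    set α1 : V := e i1 - e i2 with hα1
    have hα1Δ : α1 ∈ Δ := by
      rw [← Finset.mem_coe, hΔ]
      have hlt : (i1 : ℕ) + 1 < n := by simp only [hi1]; omega
      refine Or.inl ⟨i1, hlt, ?_⟩
      have : (⟨(i1 : ℕ) + 1, hlt⟩ : Fin n) = i2 := by
        apply Fin.ext
        simp only [hi1, hi2]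
        omega
      rw [this]
    have hα1ι : α1 ≠ ι := by
      rw [hιe]
      intro h
      have := congrArg (fun z => ⟪z, e i2⟫) h
      simp only [hα1, inner_sub_left, on_inner he, if_pos rfl, if_neg h12] at this
      norm_num at this
    set c : V → ℝ := fun v => if v = α1 then 1 else if v = ι then 2 else 0 with hcdef
    have hc0 : ∀ x ∈ Δ, 0 ≤ c x := by
      intro x _
      show (0:ℝ) ≤ if x = α1 then 1 else if x = ι then 2 else 0
      split_ifs <;> norm_num
    have hsum : γ = ∑ x ∈ Δ, c x • x := by
      have hSsub : ({α1, ι} : Finset V) ⊆ Δ := by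
        rw [Finset.insert_subset_iff, Finset.singleton_subset_iff]
        exact ⟨hα1Δ, hι⟩
      have hzero : ∀ x ∈ Δ, x ∉ ({α1, ι} : Finset V) → c x • x = 0 := by
        intro x _ hx
        rw [Finset.mem_insert, Finset.mem_singleton] at hx
        push_neg at hx
        show (if x = α1 then (1:ℝ) else if x = ι then 2 else 0) • x = 0
        rw [if_neg hx.1, if_neg hx.2, zero_smul]
      rw [← Finset.sum_subset hSsub hzero, Finset.sum_pair hα1ι]
      have hv1 : c α1 = 1 := by
        show (if α1 = α1 then (1:ℝ) else if α1 = ι then 2 else 0) = 1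
        rw [if_pos rfl]
      have hv2 : c ι = 2 := by
        show (if ι = α1 then (1:ℝ) else if ι = ι then 2 else 0) = 2
        rw [if_neg (Ne.symm hα1ι), if_pos rfl]
      rw [hv1, hv2, hγe, hιe, hα1]
      module
    refine ⟨mem_Pos.mpr ⟨hγΦ, c, hc0, hsum⟩, hbound, c, hc0, hsum, ?_⟩
    have hcι : c ι = 2 := by
      show (if ι = α1 then (1:ℝ) else if ι = ι then 2 else 0) = 2
      rw [if_neg (Ne.symm hα1ι), if_pos rfl]
    rw [hcι, hγγ, hιe, nrm_one he]
    norm_num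
  · -- type C
    have hfne : ∀ (a b : ℕ) (ha : a < n) (hb : b < n), a ≠ b → (⟨a, ha⟩ : Fin n) ≠ ⟨b, hb⟩ := by
      intro a b ha hb hab h
      exact hab (by simpa using congrArg Fin.val h)
    set i0 : Fin n := ⟨0, by omega⟩ with hi0
    set iOne : Fin n := ⟨1, by omega⟩ with hiOne
    set im : Fin n := ⟨n - 1, by omega⟩ with him
    have h01 : i0 ≠ iOne := hfne 0 1 (by omega) (by omega) (by omega)
    have hγe : γ = (2:ℝ) • e i0 := hγeq
    have hιe : ι = e i0 - e iOne := hιeq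
    have hγΦ : γ ∈ Φ := by
      rw [← Finset.mem_coe, hΦ]
      exact Or.inr ⟨i0, Or.inl hγe⟩
    have hγγ : ⟪γ, γ⟫ = 4 := by rw [hγe]; exact nrm_two he i0
    have hbound : ∀ x ∈ Φ, ⟪x, x⟫ ≤ ⟪γ, γ⟫ := by
      intro x hx
      rw [hγγ]
      rw [← Finset.mem_coe, hΦ] at hx
      rcases hx with ⟨i, j, hij, rfl | rfl | rfl⟩ | ⟨i, rfl | rfl⟩
      · rw [nrm_sub he hij]; norm_num
      · rw [nrm_add he hij]; norm_num
      · rw [inner_neg_neg, nrm_add he hij]; norm_num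
      · rw [nrm_two he]
      · rw [inner_neg_neg, nrm_two he]
    set g : Fin n → V :=
      fun i => if h : (i : ℕ) + 1 < n then e i - e ⟨(i : ℕ) + 1, h⟩ else (2:ℝ) • e im
      with hgdef
    have hgval1 : ∀ (i : Fin n) (h : (i : ℕ) + 1 < n), g i = e i - e ⟨(i : ℕ) + 1, h⟩ :=
      fun i h => dif_pos h
    have hgval2 : ∀ (i : Fin n), ¬((i : ℕ) + 1 < n) → g i = (2:ℝ) • e im :=
      fun i h => dif_neg h
    have hconsne : ∀ (k : ℕ) (hk : k < n) (hk1 : k + 1 < n),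
        (⟨k, hk⟩ : Fin n) ≠ ⟨k + 1, hk1⟩ := fun k hk hk1 => hfne k (k+1) hk hk1 (by omega)
    have hsubne2 : ∀ (i j : Fin n), i ≠ j → e i - e j ≠ (2:ℝ) • e im := by
      intro i j hij
      exact ne_of_nrm (by rw [nrm_sub he hij, nrm_two he]; norm_num)
    have hΔrange : (Δ : Set V) = Set.range g := by
      rw [hΔ]
      ext v
      constructor
      · rintro (⟨i, h, rfl⟩ | ⟨h, rfl⟩)
        · exact ⟨i, hgval1 i h⟩
        · exact ⟨im, hgval2 im (by simp only [him]; omega)⟩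
      · rintro ⟨i, rfl⟩
        by_cases h : (i : ℕ) + 1 < n
        · rw [hgval1 i h]
          exact Or.inl ⟨i, h, rfl⟩
        · rw [hgval2 i h]
          exact Or.inr ⟨by omega, rfl⟩
    have hginj : ∀ x ∈ Finset.univ, ∀ y ∈ Finset.univ, g x = g y → x = y := by
      intro x _ y _ hxy
      by_cases hx : (x : ℕ) + 1 < n <;> by_cases hy : (y : ℕ) + 1 < n
      · rw [hgval1 x hx, hgval1 y hy] at hxy
        by_contra hne
        have hyx : y ≠ x := fun h => hne h.symm
        have hxx1 : (⟨(x : ℕ) + 1, hx⟩ : Fin n) ≠ x := fun h => by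
          have := congrArg Fin.val h
          simp at this
        have h1 := congrArg (fun z => ⟪z, e x⟫) hxy
        simp only [inner_sub_left, on_inner he, hxx1, hyx, if_false, if_true,
          eq_self_iff_true] at h1
        rcases eq_or_ne (⟨(y : ℕ) + 1, hy⟩ : Fin n) x with h | h
        · rw [if_pos h] at h1; norm_num at h1
        · rw [if_neg h] at h1; norm_num at h1
      · rw [hgval1 x hx, hgval2 y hy] at hxy
        exact absurd hxy (hsubne2 x _ (hconsne x.val x.isLt hx))
      · rw [hgval2 x hx, hgval1 y hy] at hxy
        exact absurd hxy.symm (hsubne2 y _ (hconsne y.val y.isLt hy))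
      · apply Fin.ext
        omega
    have hΔimg : Δ = Finset.image g Finset.univ := by
      apply Finset.coe_injective
      rw [Finset.coe_image, Finset.coe_univ, Set.image_univ, hΔrange]
    set c : V → ℝ := fun v => if v = (2:ℝ) • e im then 1 else 2 with hcdef
    have hc0 : ∀ x ∈ Δ, 0 ≤ c x := by
      intro x _
      show (0:ℝ) ≤ if x = (2:ℝ) • e im then 1 else 2
      split_ifs <;> norm_num
    have hsum : γ = ∑ x ∈ Δ, c x • x := by
      rw [hΔimg, Finset.sum_image hginj]
      set F : ℕ → V := fun k => if h : k < n then c (g ⟨k, h⟩) • g ⟨k, h⟩ else 0 with hF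
      have hFi : ∀ i : Fin n, c (g i) • g i = F (i : ℕ) := by
        intro i
        have hr : F (i : ℕ) = if h : (i : ℕ) < n then c (g ⟨i, h⟩) • g ⟨i, h⟩ else 0 := rfl
        rw [hr, dif_pos i.isLt]
      have hstep : ∑ i : Fin n, c (g i) • g i = ∑ i : Fin n, F (i : ℕ) :=
        Finset.sum_congr rfl (fun i _ => hFi i)
      rw [hstep, Fin.sum_univ_eq_sum_range F n]
      set m := n - 1 with hm
      have hnm : n = m + 1 := by omega
      rw [hnm, Finset.sum_range_succ]
      have hmn : m < n := by omega
      have hgm : g ⟨m, hmn⟩ = (2:ℝ) • e im := hgval2 _ (by simp only; omega)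
      have hFm : F m = (2:ℝ) • e im := by
        have hr : F m = if h : m < n then c (g ⟨m, h⟩) • g ⟨m, h⟩ else 0 := rfl
        rw [hr, dif_pos hmn, hgm]
        show (if (2:ℝ) • e im = (2:ℝ) • e im then (1:ℝ) else 2) • ((2:ℝ) • e im) = _
        rw [if_pos rfl, one_smul]
      set E : ℕ → V := fun k => if h : k < n then (2:ℝ) • e ⟨k, h⟩ else 0 with hE
      have hFk : ∀ k ∈ Finset.range m, F k = E k - E (k + 1) := by
        intro k hk
        rw [Finset.mem_range] at hk
        have hkn : k < n := by omega
        have hk1n : k + 1 < n := by omega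
        have e1 : F k = if h : k < n then c (g ⟨k, h⟩) • g ⟨k, h⟩ else 0 := rfl
        have e2 : E k = if h : k < n then (2:ℝ) • e ⟨k, h⟩ else 0 := rfl
        have e3 : E (k + 1) = if h : k + 1 < n then (2:ℝ) • e ⟨k + 1, h⟩ else 0 := rfl
        rw [e1, e2, e3, dif_pos hkn, dif_pos hkn, dif_pos hk1n]
        rw [hgval1 ⟨k, hkn⟩ hk1n]
        have hne : e ⟨k, hkn⟩ - e ⟨k + 1, hk1n⟩ ≠ (2:ℝ) • e im :=
          hsubne2 _ _ (hconsne k hkn hk1n)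
        show (if _ = (2:ℝ) • e im then (1:ℝ) else 2) • _ = _
        rw [if_neg hne, smul_sub]
      rw [Finset.sum_congr rfl hFk, Finset.sum_range_sub' E m]
      have hE0 : E 0 = (2:ℝ) • e i0 := dif_pos (by omega)
      have hEm : E m = (2:ℝ) • e im := dif_pos hmn
      rw [hE0, hEm, hFm, hγe]
      module
    refine ⟨mem_Pos.mpr ⟨hγΦ, c, hc0, hsum⟩, hbound, c, hc0, hsum, ?_⟩
    have hcι : c ι = 2 := by
      show (if ι = (2:ℝ) • e im then (1:ℝ) else 2) = 2
      rw [if_neg (by rw [hιe]; exact hsubne2 i0 iOne h01)]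
    rw [hcι, hγγ, hιe, nrm_sub he h01]
    norm_num

end TypeBC

section Main

variable {V' : Type*} [NormedAddCommGroup V'] [InnerProductSpace ℝ V']

set_option maxHeartbeats 1600000 in
theorem main (Φ Δ : Finset V') (hRS : IsRS Φ Δ) (ι : V') (hι : ι ∈ Δ)
    (hmin : Minuscule Φ Δ ι)
    (γ : V') (hγ : DistinguishedGamma Φ Δ ι γ)
    (θ : V') (hθ : IsHighest Φ Δ θ)
    (wPQ wPQi : V' → V')
    (hwPQ : wPQ ∈ Weyl (Δ.erase ι))
    (hinv : wPQ ∘ wPQi = id ∧ wPQi ∘ wPQ = id)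
    (hInvSet : ∀ β ∈ Pos Φ Δ, (-(wPQ β) ∈ Pos Φ Δ ↔
        (β ∈ Pos Φ (Δ.erase ι) ∧
         β ∉ Pos Φ ((Δ.erase ι).filter fun j => cpr j γ = 0))))
    (w : V' → V') (hw : MinRep Φ Δ (Δ.erase ι) w)
    (h1 : len Δ (w ∘ sref γ) + len Δ (sref γ) = len Δ w)
    (h2 : len Δ (w ∘ (sref γ ∘ wPQi)) + len Δ (sref γ ∘ wPQi) = len Δ w) :
    w γ = -θ := by
  obtain ⟨hγP, hlong, cγ, hcγ0, hcγsum, hcγι⟩ := gamma_facts hRS hι hγ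
  have hγΦ : γ ∈ Φ := Pos_sub_Φ hγP
  have hγγne : ⟪γ, γ⟫ ≠ 0 := root_inner_ne hRS hγΦ
  have hγγpos : (0:ℝ) < ⟪γ, γ⟫ := root_inner_pos hRS hγΦ
  have hιΦ : ι ∈ Φ := hRS.simple_mem ι hι
  have hιιpos : (0:ℝ) < ⟪ι, ι⟫ := root_inner_pos hRS hιΦ
  have hwW : w ∈ Weyl Δ := hw.1
  have hwgood : GoodW Φ w := weyl_good hRS hwW
  have hsγW : sref γ ∈ Weyl Δ := sref_weyl hRS hγP
  have hsγsγ : ∀ x, sref γ (sref γ x) = x := sref_sref hγγne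
  -- derive F1 from h1
  have huv1 : (w ∘ sref γ) ∘ sref γ = w := by
    funext x
    exact congrArg w (hsγsγ x)
  have hL1 : len Δ ((w ∘ sref γ) ∘ sref γ) = len Δ (w ∘ sref γ) + len Δ (sref γ) := by
    rw [huv1, ← h1]
  have F1 : ∀ β ∈ Nset Φ Δ (sref γ), β ∈ Nset Φ Δ w := by
    intro β hβ
    have := additivity hRS (weyl_comp hwW hsγW) hsγW hL1 β hβ
    rwa [huv1] at this
  -- derive F2 from h2
  have hwPQW : wPQ ∈ Weyl Δ := weyl_mono (Finset.erase_subset ι Δ) hwPQ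
  have hv2W : wPQ ∘ sref γ ∈ Weyl Δ := weyl_comp hwPQW hsγW
  have hv2b2 : (wPQ ∘ sref γ) ∘ (sref γ ∘ wPQi) = id := by
    funext x
    show wPQ (sref γ (sref γ (wPQi x))) = x
    rw [hsγsγ]
    exact congrFun hinv.1 x
  have hb2v2 : (sref γ ∘ wPQi) ∘ (wPQ ∘ sref γ) = id := by
    funext x
    show sref γ (wPQi (wPQ (sref γ x))) = x
    have hix : wPQi (wPQ (sref γ x)) = sref γ x := congrFun hinv.2 (sref γ x)
    rw [hix, hsγsγ]
  have hb2W : (sref γ ∘ wPQi) ∈ Weyl Δ := (inv_weyl hRS hv2W hb2v2 hv2b2).1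
  have hlen2 : len Δ (sref γ ∘ wPQi) = len Δ (wPQ ∘ sref γ) :=
    len_inv_eq hRS hb2W hv2W hb2v2 hv2b2
  have hu2v2 : (w ∘ (sref γ ∘ wPQi)) ∘ (wPQ ∘ sref γ) = w := by
    funext x
    show w ((sref γ ∘ wPQi) ((wPQ ∘ sref γ) x)) = w x
    exact congrArg w (congrFun hb2v2 x)
  have hL2 : len Δ ((w ∘ (sref γ ∘ wPQi)) ∘ (wPQ ∘ sref γ))
      = len Δ (w ∘ (sref γ ∘ wPQi)) + len Δ (wPQ ∘ sref γ) := by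
    rw [hu2v2, ← h2, hlen2]
  have F2 : ∀ β ∈ Nset Φ Δ (wPQ ∘ sref γ), β ∈ Nset Φ Δ w := by
    intro β hβ
    have := additivity hRS (weyl_comp hwW hb2W) hv2W hL2 β hβ
    rwa [hu2v2] at this
  -- γ is an inversion of w
  have hγN : γ ∈ Nset Φ Δ (sref γ) := by
    rw [mem_Nset]
    refine ⟨hγP, ?_⟩
    rw [sref_self hγγne, neg_neg]
    exact hγP
  have hbP : -(w γ) ∈ Pos Φ Δ := (mem_Nset.mp (F1 γ hγN)).2
  -- an inverse for w
  obtain ⟨lw, hlwlen, hlw, hweq⟩ := weyl_min_word hwW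
  set wi : V' → V' := Wd lw.reverse with hwidef
  have hwigood : GoodW Φ wi :=
    GoodW.wd hRS (fun α hα => hlw α (List.mem_reverse.mp hα))
  have hwwi : ∀ x, w (wi x) = x := fun x => by
    rw [hweq]
    exact congrFun (Wd_inv hRS hlw).1 x
  -- dominance of -(w γ)
  have hdom : ∀ α ∈ Δ, ⟪w γ, α⟫ ≤ 0 := by
    intro α hα
    by_contra hcon
    push_neg at hcon
    have hαΦ : α ∈ Φ := hRS.simple_mem α hα
    have hαP : α ∈ Pos Φ Δ := simple_mem_Pos hRS hα
    set x := wi α with hxdef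
    have hwx : w x = α := hwwi α
    have hxΦ : x ∈ Φ := hwigood.maps α hαΦ
    have hγx : 0 < ⟪γ, x⟫ := by
      have hh : ⟪w γ, w x⟫ = ⟪γ, x⟫ := hwgood.inner γ x
      rw [hwx] at hh
      linarith
    have hxnotN : x ∈ Nset Φ Δ w → False := by
      intro hmem
      have hneg := (mem_Nset.mp hmem).2
      rw [hwx] at hneg
      exact pos_neg_excl hRS hαP hneg
    rcases pos_dichot hRS hxΦ with hxP | hxN
    · -- Case A : x positive
      set k := cpr x γ with hkdef
      obtain ⟨kz, hkz⟩ := hRS.cryst x hxΦ γ hγΦ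
      have hxγ : 0 < ⟪x, γ⟫ := by rw [real_inner_comm]; exact hγx
      have hkpos : 0 < k := by
        rw [hkdef]
        unfold cpr
        positivity
      have hk1 : 1 ≤ k := by
        have hz0 : (0:ℝ) < (kz:ℝ) := by rw [hkz, ← hkdef]; exact hkpos
        have hz1 : (1:ℤ) ≤ kz := by exact_mod_cast hz0
        have : (1:ℝ) ≤ (kz:ℝ) := by exact_mod_cast hz1
        rw [hkz, ← hkdef] at this
        exact this
      have hxγval : 2 * ⟪x, γ⟫ = k * ⟪γ, γ⟫ := by
        rw [hkdef]
        unfold cpr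
        field_simp
      set y := sref γ x with hydef
      have hyΦ : y ∈ Φ := hRS.refl_mem γ hγΦ x hxΦ
      have hyeq : y = x - k • γ := rfl
      rcases pos_dichot hRS hyΦ with hyP | hyN
      · -- y positive : minuscule argument puts y in R_P^+ ∖ R_Q^+
        obtain ⟨cx, hcx0, hcxeq⟩ := (mem_Pos.mp hxP).2
        obtain ⟨cy, hcy0, hcyeq⟩ := (mem_Pos.mp hyP).2
        have hyeq2 : y = ∑ α' ∈ Δ, (cx α' - k * cγ α') • α' := by
          rw [hyeq]
          nth_rewrite 1 [hcxeq]
          nth_rewrite 1 [hcγsum]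
          rw [Finset.smul_sum, ← Finset.sum_sub_distrib]
          exact Finset.sum_congr rfl fun α' _ => by rw [smul_smul, sub_smul]
        have hcyval := coeff_unique hRS (hcyeq.symm.trans hyeq2) ι hι
        have hmb := minuscule_bound hRS hι hmin hxΦ hcxeq
        have hxxle := hlong x hxΦ
        have e1 : cy ι * ⟪ι, ι⟫ = cx ι * ⟪ι, ι⟫ - k * ⟪γ, γ⟫ := by
          rw [hcyval, ← hcγι]
          ring
        have e2 : cy ι * ⟪ι, ι⟫ ≤ 0 := by
          nlinarith [mul_nonneg (sub_nonneg.mpr hk1) hγγpos.le]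
        have hcyι0 : cy ι = 0 := by
          have h0 := hcy0 ι hι
          by_contra hne
          have hpos' : 0 < cy ι := lt_of_le_of_ne h0 (Ne.symm hne)
          nlinarith
        have hyRP : y ∈ Pos Φ (Δ.erase ι) := mem_Pos_erase hRS hι hyΦ hcy0 hcyeq hcyι0
        have hyγ : ⟪y, γ⟫ < 0 := by
          rw [hyeq, inner_sub_left, real_inner_smul_left]
          nlinarith [mul_pos hkpos hγγpos]
        have hynQ : y ∉ Pos Φ ((Δ.erase ι).filter fun j => cpr j γ = 0) := by
          intro hmem
          have := Qperp hRS hγγne hmem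
          linarith
        have hwPQy : -(wPQ y) ∈ Pos Φ Δ := (hInvSet y hyP).mpr ⟨hyRP, hynQ⟩
        have hxN2 : x ∈ Nset Φ Δ (wPQ ∘ sref γ) := by
          rw [mem_Nset]
          refine ⟨hxP, ?_⟩
          show -(wPQ (sref γ x)) ∈ Pos Φ Δ
          rw [← hydef]
          exact hwPQy
        exact hxnotN (F2 x hxN2)
      · -- y negative : x is an inversion of sref γ
        have hxN1 : x ∈ Nset Φ Δ (sref γ) := by
          rw [mem_Nset]
          refine ⟨hxP, ?_⟩
          show -(sref γ x) ∈ Pos Φ Δ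
          rw [← hydef]
          exact hyN
        exact hxnotN (F1 x hxN1)
    · -- Case B : x negative
      set z := -x with hzdef
      have hzP : z ∈ Pos Φ Δ := hxN
      have hzΦ : z ∈ Φ := Pos_sub_Φ hzP
      have hwz : w z = -α := by rw [hzdef, hwgood.neg, hwx]
      set t := - cpr z γ with htdef
      obtain ⟨kz, hkz⟩ := hRS.cryst z hzΦ γ hγΦ
      have hzγ : ⟪z, γ⟫ < 0 := by
        rw [hzdef, inner_neg_left]
        have : ⟪x, γ⟫ = ⟪γ, x⟫ := real_inner_comm γ x
        linarith
      have hkneg : cpr z γ < 0 := by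
        unfold cpr
        exact div_neg_of_neg_of_pos (by linarith) hγγpos
      have ht1 : 1 ≤ t := by
        have hz0 : (kz:ℝ) < 0 := by rw [hkz]; exact hkneg
        have hz1 : kz < 0 := by exact_mod_cast hz0
        have hz2 : kz ≤ -1 := by omega
        have hz3 : (kz:ℝ) ≤ -1 := by exact_mod_cast hz2
        rw [htdef, ← hkz]
        linarith
      have hz'eq0 : sref γ z = z + t • γ := by
        rw [sref_apply, htdef]
        module
      have hz'Φ : sref γ z ∈ Φ := hRS.refl_mem γ hγΦ z hzΦ
      obtain ⟨cz, hcz0, hczeq⟩ := (mem_Pos.mp hzP).2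
      have hz'eq : sref γ z = ∑ α' ∈ Δ, (cz α' + t * cγ α') • α' := by
        rw [hz'eq0]
        nth_rewrite 1 [hczeq]
        nth_rewrite 1 [hcγsum]
        rw [Finset.smul_sum, ← Finset.sum_add_distrib]
        exact Finset.sum_congr rfl fun α' _ => by rw [smul_smul, add_smul]
      have hmb' : (cz ι + t * cγ ι) * ⟪ι, ι⟫ ≤ ⟪sref γ z, sref γ z⟫ :=
        minuscule_bound hRS hι hmin hz'Φ hz'eq
      have hz'nrm : ⟪sref γ z, sref γ z⟫ = ⟪z, z⟫ := sref_inner hγγne z z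
      have hzzle := hlong z hzΦ
      have hczι : cz ι = 0 := by
        have h0 := hcz0 ι hι
        have e1 : (cz ι + t * cγ ι) * ⟪ι, ι⟫ = cz ι * ⟪ι, ι⟫ + t * ⟪γ, γ⟫ := by
          rw [← hcγι]; ring
        by_contra hne
        have hpos' : 0 < cz ι := lt_of_le_of_ne h0 (Ne.symm hne)
        nlinarith [mul_nonneg (sub_nonneg.mpr ht1) hγγpos.le, mul_pos hpos' hιιpos]
      have hzRP : z ∈ Pos Φ (Δ.erase ι) := mem_Pos_erase hRS hι hzΦ hcz0 hczeq hczι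
      have hwzP := hw.2 z hzRP
      rw [hwz] at hwzP
      exact pos_neg_excl hRS hαP hwzP
  -- conclusion via the highest root
  have hθΦ : θ ∈ Φ := Pos_sub_Φ hθ.1
  have hθdom := highest_dominant hRS hθ
  have hbΦ : -(w γ) ∈ Φ := Pos_sub_Φ hbP
  obtain ⟨d, hd0, hdeq⟩ := hθ.2 (-(w γ)) hbΦ
  have hbb : ⟪-(w γ), -(w γ)⟫ = ⟪γ, γ⟫ := by
    rw [inner_neg_neg]
    exact hwgood.norm_eq γ
  have hθθle : ⟪θ, θ⟫ ≤ ⟪-(w γ), -(w γ)⟫ := by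
    rw [hbb]
    exact hlong θ hθΦ
  have hbdom : ∀ α ∈ Δ, 0 ≤ ⟪-(w γ), α⟫ := by
    intro α hα
    rw [inner_neg_left]
    linarith [hdom α hα]
  have h1' : 0 ≤ ⟪θ - -(w γ), -(w γ)⟫ := by
    rw [hdeq, sum_inner]
    refine Finset.sum_nonneg fun α hα => ?_
    rw [real_inner_smul_left, real_inner_comm]
    exact mul_nonneg (hd0 α hα) (hbdom α hα)
  have h2' : 0 ≤ ⟪θ - -(w γ), θ⟫ := by
    rw [hdeq, sum_inner]
    refine Finset.sum_nonneg fun α hα => ?_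
    rw [real_inner_smul_left, real_inner_comm]
    exact mul_nonneg (hd0 α hα) (hθdom α hα)
  have hsum0 : ⟪θ - -(w γ), θ⟫ + ⟪θ - -(w γ), -(w γ)⟫ = ⟪θ, θ⟫ - ⟪-(w γ), -(w γ)⟫ := by
    rw [inner_sub_left, inner_sub_left, real_inner_comm (-(w γ)) θ]
    ring
  have hzero : ⟪θ - -(w γ), θ - -(w γ)⟫ = 0 := by
    rw [inner_sub_right]
    have hA : ⟪θ - -(w γ), θ⟫ = 0 := by linarith
    have hB : ⟪θ - -(w γ), -(w γ)⟫ = 0 := by linarith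
    rw [hA, hB]
    ring
  have hfin : θ - -(w γ) = 0 := inner_self_eq_zero.mp hzero
  have hfin2 : θ = -(w γ) := sub_eq_zero.mp hfin
  rw [hfin2, neg_neg]

end Main

end Aux

open Pp in
/-- Converse part of Proposition 2.3: if `w ∈ W^P` satisfies
`ℓ(w s_γ) = ℓ(w) - ℓ(s_γ)` and `ℓ(w s'_γ) = ℓ(w) - ℓ(s'_γ)`
(both stated additively), then `wγ = -θ`, i.e. `w ∈ W(γ)`. -/
theorem stmt8 {V : Type*} [NormedAddCommGroup V] [InnerProductSpace ℝ V]
    (Φ Δ : Finset V) (hRS : IsRS Φ Δ) (ι : V) (hι : ι ∈ Δ)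
    (hmin : Minuscule Φ Δ ι)
    (γ : V) (hγ : DistinguishedGamma Φ Δ ι γ)
    (θ : V) (hθ : IsHighest Φ Δ θ)
    (wPQ wPQi : V → V)
    (hwPQ : wPQ ∈ Weyl (Δ.erase ι))
    (hinv : wPQ ∘ wPQi = id ∧ wPQi ∘ wPQ = id)
    (hInvSet : ∀ β ∈ Pos Φ Δ, (-(wPQ β) ∈ Pos Φ Δ ↔
        (β ∈ Pos Φ (Δ.erase ι) ∧
         β ∉ Pos Φ ((Δ.erase ι).filter fun j => cpr j γ = 0))))
    (w : V → V) (hw : MinRep Φ Δ (Δ.erase ι) w)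
    (h1 : len Δ (w ∘ sref γ) + len Δ (sref γ) = len Δ w)
    (h2 : len Δ (w ∘ (sref γ ∘ wPQi)) + len Δ (sref γ ∘ wPQi) = len Δ w) :
    w γ = -θ :=
  Aux.main Φ Δ hRS ι hι hmin γ hγ θ hθ wPQ wPQi hwPQ hinv hInvSet w hw h1 h2
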